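/- Let $\gamma' \geq 0$ be a real number and let $i \geq 1$ be an integer. Define $L_{i0} = 1$ and, for $1 \le j \le i$, $L_{ij} = \binom{i}{j} \frac{\prod_{k=0}^{j-1}(i+\gamma'-k)}{\prod_{k=1}^{j}(k+\gamma')}$, and set $R_{ij} = \sum_{k=0}^{j} L_{ik}$ and $R_i = R_{ii}$. Then for every integer $0 \le r \le i-1$, $\dfrac{R_{ir}\,(R_i - R_{ir})}{(i-r)(i-r+\gamma')\,L_{ir}} \le \dfrac{2(i+2)}{i\,(i+2\gamma')}\,R_i$. -/

import Mathlib

open Finset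

/-- The regularizing coefficients `L_{ij}` (even-dimension case):
`L_{i0} = 1` and for `j ≥ 1`,
`L_{ij} = binom(i,j) ⬝ (∏_{k=0}^{j-1} (i+γ'-k)) / (∏_{k=1}^{j} (k+γ'))`.
(For `j = 0` both products are empty, yielding `1`.) -/
noncomputable def Lcoef (γ : ℝ) (i j : ℕ) : ℝ :=
  (i.choose j : ℝ) * (∏ k ∈ Finset.range j, ((i : ℝ) + γ - (k : ℝ))) /
    ∏ k ∈ Finset.Icc 1 j, ((k : ℝ) + γ)

/-- The partial sums `R_{ij} = ∑_{k=0}^{j} L_{ik}`. -/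
noncomputable def Rcoef (γ : ℝ) (i j : ℕ) : ℝ :=
  ∑ k ∈ Finset.range (j + 1), Lcoef γ i k

lemma scalarA (n x g : ℝ) (hn : 1 ≤ n) (hx : 0 ≤ x) (hg : 0 ≤ g) (h : 2*x+1 ≤ n) :
    (x+1)*(n*(n+2*g)) ≤ 2*(n+2)*((n-x)*(n-x+g)) := by
  have h1 : n+1 ≤ 2*(n-x) := by linarith
  have h2 : n+1+2*g ≤ 2*(n-x+g) := by linarith
  have hB : n*(n+2*g) ≤ (n+2)*(n+1+2*g) := by nlinarith
  have hA : (n+1)*(n+1+2*g) ≤ (2*(n-x))*(2*(n-x+g)) :=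
    mul_le_mul h1 h2 (by linarith) (by linarith)
  calc (x+1)*(n*(n+2*g)) ≤ (x+1)*((n+2)*(n+1+2*g)) :=
        mul_le_mul_of_nonneg_left hB (by linarith)
    _ ≤ ((n+1)/2)*((n+2)*(n+1+2*g)) :=
        mul_le_mul_of_nonneg_right (by linarith) (by nlinarith)
    _ = ((n+2)/2) * ((n+1)*(n+1+2*g)) := by ring
    _ ≤ ((n+2)/2) * ((2*(n-x))*(2*(n-x+g))) :=
        mul_le_mul_of_nonneg_left hA (by linarith)
    _ = 2*(n+2)*((n-x)*(n-x+g)) := by ring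

lemma scalarB (n x g : ℝ) (hn : 1 ≤ n) (hx : 0 ≤ x) (hg : 0 ≤ g) (h : n ≤ 2*x+1) :
    (n-x)*(n*(n+2*g)) ≤ 2*(n+2)*((x+1)*(x+1+g)) := by
  have h1 : n+1 ≤ 2*(x+1) := by linarith
  have h2 : n+1+2*g ≤ 2*(x+1+g) := by linarith
  have hB : n*(n+2*g) ≤ (n+2)*(n+1+2*g) := by nlinarith
  have hA : (n+1)*(n+1+2*g) ≤ (2*(x+1))*(2*(x+1+g)) :=
    mul_le_mul h1 h2 (by linarith) (by linarith)
  calc (n-x)*(n*(n+2*g)) ≤ ((n+1)/2)*(n*(n+2*g)) :=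
        mul_le_mul_of_nonneg_right (by linarith) (by nlinarith)
    _ ≤ ((n+1)/2)*((n+2)*(n+1+2*g)) :=
        mul_le_mul_of_nonneg_left hB (by linarith)
    _ = ((n+2)/2) * ((n+1)*(n+1+2*g)) := by ring
    _ ≤ ((n+2)/2) * ((2*(x+1))*(2*(x+1+g))) :=
        mul_le_mul_of_nonneg_left hA (by linarith)
    _ = 2*(n+2)*((x+1)*(x+1+g)) := by ring

lemma denom_pos (γ : ℝ) (hγ : 0 ≤ γ) (j : ℕ) : 0 < ∏ k ∈ Finset.Icc 1 j, ((k : ℝ) + γ) := by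
  apply Finset.prod_pos
  intro k hk
  have : 1 ≤ k := (Finset.mem_Icc.mp hk).1
  have : (1:ℝ) ≤ (k:ℝ) := by exact_mod_cast this
  linarith

lemma numer_pos (γ : ℝ) (hγ : 0 ≤ γ) (i j : ℕ) (hj : j ≤ i) :
    0 < ∏ k ∈ Finset.range j, ((i : ℝ) + γ - (k : ℝ)) := by
  apply Finset.prod_pos
  intro k hk
  have hk' : k < i := lt_of_lt_of_le (Finset.mem_range.mp hk) hj
  have : (k:ℝ) < (i:ℝ) := by exact_mod_cast hk'
  linarith

lemma Lcoef_pos (γ : ℝ) (hγ : 0 ≤ γ) (i j : ℕ) (hj : j ≤ i) : 0 < Lcoef γ i j := by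
  apply div_pos _ (denom_pos γ hγ j)
  exact mul_pos (by exact_mod_cast Nat.choose_pos hj) (numer_pos γ hγ i j hj)

lemma Lcoef_ratio (γ : ℝ) (hγ : 0 ≤ γ) (i j : ℕ) (hj : j < i) :
    Lcoef γ i (j+1) * (((j:ℝ)+1) * (((j:ℝ)+1) + γ)) =
      Lcoef γ i j * (((i:ℝ)-(j:ℝ)) * ((i:ℝ)+γ-(j:ℝ))) := by
  have hc : (i.choose (j+1) : ℝ) * ((j:ℝ)+1) = (i.choose j : ℝ) * ((i:ℝ)-(j:ℝ)) := by
    have := Nat.choose_succ_right_eq i j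
    have h2 : ((i.choose (j+1)):ℝ) * (((j+1):ℕ):ℝ) = ((i.choose j):ℝ) * (((i-j:ℕ)):ℝ) := by
      exact_mod_cast congrArg (Nat.cast (R := ℝ)) this
    rw [Nat.cast_sub hj.le] at h2
    push_cast at h2
    linarith
  have hq : (0:ℝ) < ∏ k ∈ Finset.Icc 1 j, ((k : ℝ) + γ) := denom_pos γ hγ j
  have hd : (0:ℝ) < ((j:ℝ)+1) + γ := by positivity
  unfold Lcoef
  rw [Finset.prod_range_succ, Finset.prod_Icc_succ_top (Nat.le_add_left 1 j)]
  push_cast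
  field_simp
  linear_combination (∏ x ∈ Finset.range j, ((i:ℝ) + γ - (x:ℝ))) * ((i:ℝ)+γ-(j:ℝ)) * hc

lemma Lcoef_step_le (γ : ℝ) (hγ : 0 ≤ γ) (i j : ℕ) (h : 2*j+1 ≤ i) :
    Lcoef γ i j ≤ Lcoef γ i (j+1) := by
  have hj : j < i := by omega
  have hA : (0:ℝ) < ((j:ℝ)+1) * (((j:ℝ)+1) + γ) := by positivity
  have hji : (j:ℝ) + 1 ≤ (i:ℝ) - (j:ℝ) := by
    have : (2*j+1 : ℕ) ≤ i := h
    have := (Nat.cast_le (α := ℝ)).2 this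
    push_cast at this; linarith
  have hB : ((j:ℝ)+1) * (((j:ℝ)+1) + γ) ≤ ((i:ℝ)-(j:ℝ)) * ((i:ℝ)+γ-(j:ℝ)) := by
    apply mul_le_mul hji (by linarith) (by positivity) (by linarith)
  have hL := Lcoef_pos γ hγ i j hj.le
  have key := Lcoef_ratio γ hγ i j hj
  have hmul : Lcoef γ i j * (((j:ℝ)+1) * (((j:ℝ)+1) + γ)) ≤
      Lcoef γ i (j+1) * (((j:ℝ)+1) * (((j:ℝ)+1) + γ)) := by
    rw [key]
    exact mul_le_mul_of_nonneg_left hB hL.le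
  exact le_of_mul_le_mul_right hmul hA

lemma Lcoef_step_ge (γ : ℝ) (hγ : 0 ≤ γ) (i j : ℕ) (hj : j < i) (h : i ≤ 2*j+1) :
    Lcoef γ i (j+1) ≤ Lcoef γ i j := by
  have hA : (0:ℝ) < ((j:ℝ)+1) * (((j:ℝ)+1) + γ) := by positivity
  have hji : (i:ℝ) - (j:ℝ) ≤ (j:ℝ) + 1 := by
    have := (Nat.cast_le (α := ℝ)).2 h
    push_cast at this; linarith
  have hij : (0:ℝ) < (i:ℝ) - (j:ℝ) := by
    have := (Nat.cast_lt (α := ℝ)).2 hj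
    linarith
  have hB : ((i:ℝ)-(j:ℝ)) * ((i:ℝ)+γ-(j:ℝ)) ≤ ((j:ℝ)+1) * (((j:ℝ)+1) + γ) := by
    apply mul_le_mul hji (by linarith) (by linarith) (by positivity)
  have hL := Lcoef_pos γ hγ i j hj.le
  have key := Lcoef_ratio γ hγ i j hj
  have hmul : Lcoef γ i (j+1) * (((j:ℝ)+1) * (((j:ℝ)+1) + γ)) ≤
      Lcoef γ i j * (((j:ℝ)+1) * (((j:ℝ)+1) + γ)) := by
    rw [key]
    exact mul_le_mul_of_nonneg_left hB hL.le
  exact le_of_mul_le_mul_right hmul hA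

lemma Lcoef_le_of_le (γ : ℝ) (hγ : 0 ≤ γ) (i : ℕ) : ∀ r, 2*r ≤ i+1 → ∀ k, k ≤ r →
    Lcoef γ i k ≤ Lcoef γ i r := by
  intro r
  induction r with
  | zero => intro _ k hk; interval_cases k; exact le_refl _
  | succ r ih =>
    intro hr k hk
    rcases Nat.eq_or_lt_of_le hk with h | h
    · rw [h]
    · have hk' : k ≤ r := by omega
      have h1 : Lcoef γ i k ≤ Lcoef γ i r := ih (by omega) k hk'
      have h2 : Lcoef γ i r ≤ Lcoef γ i (r+1) := Lcoef_step_le γ hγ i r (by omega)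
      linarith

lemma Lcoef_ge_of_ge (γ : ℝ) (hγ : 0 ≤ γ) (i s : ℕ) (h : i ≤ 2*s+1) :
    ∀ k, s ≤ k → k ≤ i → Lcoef γ i k ≤ Lcoef γ i s := by
  intro k
  induction k with
  | zero => intro hs _; have : s = 0 := Nat.le_zero.mp hs; rw [this]
  | succ k ih =>
    intro hs hk
    rcases Nat.eq_or_lt_of_le hs with h' | h'
    · rw [← h']
    · have hsk : s ≤ k := by omega
      have h1 : Lcoef γ i (k+1) ≤ Lcoef γ i k :=
        Lcoef_step_ge γ hγ i k (by omega) (by omega)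
      have h2 := ih hsk (by omega)
      linarith

theorem Fquot_le_bound (γ : ℝ) (hγ : 0 ≤ γ) (i : ℕ) (hi : 1 ≤ i) :
    ∀ r : ℕ, r ≤ i - 1 →
      Rcoef γ i r * (Rcoef γ i i - Rcoef γ i r) /
          (((i : ℝ) - (r : ℝ)) * ((i : ℝ) - (r : ℝ) + γ) * Lcoef γ i r) ≤
        2 * ((i : ℝ) + 2) / ((i : ℝ) * ((i : ℝ) + 2 * γ)) * Rcoef γ i i := by
  intro r hr
  have hri : r < i := by omega
  have hn : (1:ℝ) ≤ (i:ℝ) := by exact_mod_cast hi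
  have hx : (0:ℝ) ≤ (r:ℝ) := Nat.cast_nonneg r
  have hxn : (r:ℝ) + 1 ≤ (i:ℝ) := by exact_mod_cast hri
  have hL : 0 < Lcoef γ i r := Lcoef_pos γ hγ i r hri.le
  have hD : 0 < ((i:ℝ) - (r:ℝ)) * ((i:ℝ) - (r:ℝ) + γ) * Lcoef γ i r := by
    apply mul_pos (mul_pos (by linarith) (by linarith)) hL
  have hP : (0:ℝ) < (i:ℝ) * ((i:ℝ) + 2 * γ) := by nlinarith
  -- positivity and bounds for sums
  have ha : 0 < Rcoef γ i r :=
    Finset.sum_pos (fun k hk => Lcoef_pos γ hγ i k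
      (by have := Finset.mem_range.mp hk; omega))
      (Finset.nonempty_range_iff.mpr (by omega))
  have hR : 0 < Rcoef γ i i :=
    Finset.sum_pos (fun k hk => Lcoef_pos γ hγ i k
      (by have := Finset.mem_range.mp hk; omega))
      (Finset.nonempty_range_iff.mpr (by omega))
  have hbsum : Rcoef γ i i - Rcoef γ i r = ∑ k ∈ Finset.Ico (r+1) (i+1), Lcoef γ i k := by
    rw [Finset.sum_Ico_eq_sub _ (by omega)]
    rfl
  have hb0 : 0 ≤ Rcoef γ i i - Rcoef γ i r := by
    rw [hbsum]
    apply Finset.sum_nonneg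
    intro k hk
    have hk' := Finset.mem_Ico.mp hk
    exact (Lcoef_pos γ hγ i k (by omega)).le
  have hbR : Rcoef γ i i - Rcoef γ i r ≤ Rcoef γ i i := by linarith
  have haR : Rcoef γ i r ≤ Rcoef γ i i := by linarith
  -- main key inequality
  have key : Rcoef γ i r * (Rcoef γ i i - Rcoef γ i r) * ((i:ℝ) * ((i:ℝ) + 2 * γ)) ≤
      2 * ((i:ℝ) + 2) * Rcoef γ i i *
        (((i:ℝ) - (r:ℝ)) * ((i:ℝ) - (r:ℝ) + γ) * Lcoef γ i r) := by
    rcases le_total (2*r+1) i with hcase | hcase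
    · -- case A : r in increasing zone
      have hale : Rcoef γ i r ≤ ((r:ℝ)+1) * Lcoef γ i r := by
        have hs : Rcoef γ i r ≤ ∑ _k ∈ Finset.range (r+1), Lcoef γ i r :=
          Finset.sum_le_sum (fun k hk => Lcoef_le_of_le γ hγ i r (by omega) k
            (by have := Finset.mem_range.mp hk; omega))
        rw [Finset.sum_const, Finset.card_range, nsmul_eq_mul] at hs
        push_cast at hs
        exact hs
      have hsc : ((r:ℝ)+1)*((i:ℝ)*((i:ℝ)+2*γ)) ≤
          2*((i:ℝ)+2)*(((i:ℝ)-(r:ℝ))*((i:ℝ)-(r:ℝ)+γ)) := by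
        apply scalarA _ _ _ hn hx hγ
        have : ((2*r+1 : ℕ):ℝ) ≤ (i:ℝ) := by exact_mod_cast hcase
        push_cast at this
        linarith
      calc Rcoef γ i r * (Rcoef γ i i - Rcoef γ i r) * ((i:ℝ) * ((i:ℝ) + 2 * γ))
          ≤ (((r:ℝ)+1) * Lcoef γ i r) * Rcoef γ i i * ((i:ℝ) * ((i:ℝ) + 2 * γ)) := by
            apply mul_le_mul_of_nonneg_right _ hP.le
            exact mul_le_mul hale hbR hb0 (by positivity)
        _ = (((r:ℝ)+1)*((i:ℝ)*((i:ℝ)+2*γ))) * (Lcoef γ i r * Rcoef γ i i) := by ring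
        _ ≤ (2*((i:ℝ)+2)*(((i:ℝ)-(r:ℝ))*((i:ℝ)-(r:ℝ)+γ))) * (Lcoef γ i r * Rcoef γ i i) := by
            apply mul_le_mul_of_nonneg_right hsc
            positivity
        _ = 2 * ((i:ℝ) + 2) * Rcoef γ i i *
              (((i:ℝ) - (r:ℝ)) * ((i:ℝ) - (r:ℝ) + γ) * Lcoef γ i r) := by ring
    · -- case B : r in decreasing zone
      have hL' : 0 < Lcoef γ i (r+1) := Lcoef_pos γ hγ i (r+1) (by omega)
      have hble : Rcoef γ i i - Rcoef γ i r ≤ ((i:ℝ)-(r:ℝ)) * Lcoef γ i (r+1) := by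
        rw [hbsum]
        have hs : ∑ k ∈ Finset.Ico (r+1) (i+1), Lcoef γ i k ≤
            ∑ _k ∈ Finset.Ico (r+1) (i+1), Lcoef γ i (r+1) :=
          Finset.sum_le_sum (fun k hk => by
            have hk' := Finset.mem_Ico.mp hk
            exact Lcoef_ge_of_ge γ hγ i (r+1) (by omega) k hk'.1 (by omega))
        rw [Finset.sum_const, Nat.card_Ico, nsmul_eq_mul] at hs
        have hcast : (((i+1) - (r+1) : ℕ):ℝ) = (i:ℝ) - (r:ℝ) := by
          rw [Nat.cast_sub (by omega)]
          push_cast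
          ring
        rw [hcast] at hs
        exact hs
      have hsc : ((i:ℝ)-(r:ℝ))*((i:ℝ)*((i:ℝ)+2*γ)) ≤
          2*((i:ℝ)+2)*(((r:ℝ)+1)*((r:ℝ)+1+γ)) := by
        apply scalarB _ _ _ hn hx hγ
        have : ((i : ℕ):ℝ) ≤ ((2*r+1 : ℕ):ℝ) := by exact_mod_cast hcase
        push_cast at this
        linarith
      have hratio := Lcoef_ratio γ hγ i r hri
      calc Rcoef γ i r * (Rcoef γ i i - Rcoef γ i r) * ((i:ℝ) * ((i:ℝ) + 2 * γ))
          ≤ (Rcoef γ i i * (((i:ℝ)-(r:ℝ)) * Lcoef γ i (r+1))) * ((i:ℝ) * ((i:ℝ) + 2 * γ)) := by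
            apply mul_le_mul_of_nonneg_right _ hP.le
            exact mul_le_mul haR hble hb0 hR.le
        _ = Rcoef γ i i * (Lcoef γ i (r+1) * (((i:ℝ)-(r:ℝ))*((i:ℝ)*((i:ℝ)+2*γ)))) := by ring
        _ ≤ Rcoef γ i i * (Lcoef γ i (r+1) * (2*((i:ℝ)+2)*(((r:ℝ)+1)*((r:ℝ)+1+γ)))) := by
            apply mul_le_mul_of_nonneg_left _ hR.le
            exact mul_le_mul_of_nonneg_left hsc hL'.le
        _ = 2*((i:ℝ)+2) * (Lcoef γ i (r+1) * (((r:ℝ)+1) * (((r:ℝ)+1) + γ))) * Rcoef γ i i := by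
            ring
        _ = 2*((i:ℝ)+2) * (Lcoef γ i r * (((i:ℝ)-(r:ℝ)) * ((i:ℝ)+γ-(r:ℝ)))) * Rcoef γ i i := by
            rw [hratio]
        _ = 2 * ((i:ℝ) + 2) * Rcoef γ i i *
              (((i:ℝ) - (r:ℝ)) * ((i:ℝ) - (r:ℝ) + γ) * Lcoef γ i r) := by ring
  rw [div_le_iff₀ hD]
  rw [show 2 * ((i:ℝ) + 2) / ((i:ℝ) * ((i:ℝ) + 2 * γ)) * Rcoef γ i i *
      (((i:ℝ) - (r:ℝ)) * ((i:ℝ) - (r:ℝ) + γ) * Lcoef γ i r) =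
      (2 * ((i:ℝ) + 2) * Rcoef γ i i *
        (((i:ℝ) - (r:ℝ)) * ((i:ℝ) - (r:ℝ) + γ) * Lcoef γ i r)) / ((i:ℝ) * ((i:ℝ) + 2 * γ))
    from by ring]
  rw [le_div_iff₀ hP]
  exact key
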